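/- Every tabletop rearrangement instance admits a plan consisting of exactly |{i : sᵢ ≠ gᵢ}| + ν pick-and-place actions, where ν is the minimum cardinality of a feedback vertex set of the dependency digraph of the instance. -/

import Mathlib

open Metric in
/-- A configuration of `n` unit-disc objects in the plane (modeled by `ℂ`) is feasible
if the closed unit discs centered at the object positions are pairwise disjoint. -/
def FeasibleConfig {n : ℕ} (c : Fin n → ℂ) : Prop :=
  ∀ i j : Fin n, i ≠ j → Disjoint (closedBall (c i) 1) (closedBall (c j) 1)

/-- A pick-and-place action changes the position of exactly one object. -/
def PickPlace {n : ℕ} (c c' : Fin n → ℂ) : Prop :=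
  ∃ i : Fin n, c' i ≠ c i ∧ ∀ j : Fin n, j ≠ i → c' j = c j

/-- `plan`, the list of configurations resulting from the successive pick-and-place
actions, is a plan transforming the start configuration `s` into the goal
configuration `g`: each action changes the position of exactly one object, each
resulting configuration is feasible, and the final configuration is the goal.  The
number of actions of the plan is `plan.length`. -/
def IsPlan {n : ℕ} (s g : Fin n → ℂ) (plan : List (Fin n → ℂ)) : Prop :=
  List.Chain PickPlace s plan ∧ (∀ c ∈ plan, FeasibleConfig c) ∧
    (s :: plan).getLast (by simp) = g

open Metric in
/-- The dependency digraph of the instance: an arc from `i` to `j` (for `i ≠ j`) exactly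
when the closed unit disc centered at `g i` intersects the closed unit disc centered at
`s j`. -/
def DepArc {n : ℕ} (s g : Fin n → ℂ) (i j : Fin n) : Prop :=
  i ≠ j ∧ (Metric.closedBall (g i) 1 ∩ Metric.closedBall (s j) 1).Nonempty

/-- `S` is a feedback vertex set of the digraph with arc relation `A`: the subdigraph
induced on the complement of `S` contains no directed cycle (no nontrivial closed
directed walk). -/
def IsFVS {V : Type*} (A : V → V → Prop) (S : Set V) : Prop :=
  ∀ x : V, ¬ Relation.TransGen (fun u v => A u v ∧ u ∉ S ∧ v ∉ S) x x

/-- `ν(D)`: the minimum cardinality of a feedback vertex set of the digraph with vertex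
type `V` and arc relation `A`. -/
noncomputable def nuFVS {V : Type*} (A : V → V → Prop) : ℕ :=
  sInf {k | ∃ S : Set V, IsFVS A S ∧ S.ncard = k}

namespace Stmt14Aux

open Metric

lemma disj_of_dist {x y : ℂ} (h : 2 < dist x y) :
    Disjoint (closedBall x 1) (closedBall y 1) := by
  rw [Set.disjoint_left]
  intro z hzx hzy
  rw [mem_closedBall] at hzx hzy
  have h1 := dist_triangle x z y
  rw [dist_comm x z] at h1
  linarith

/-- The list of configurations obtained by successively moving each object of `q`
to its `f`-position, starting from configuration `c`. -/
def seg' {n : ℕ} (f : Fin n → ℂ) : (Fin n → ℂ) → List (Fin n) → List (Fin n → ℂ)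
  | _, [] => []
  | c, i :: t => Function.update c i (f i) :: seg' f (Function.update c i (f i)) t

lemma seg'_length {n : ℕ} (f : Fin n → ℂ) (c : Fin n → ℂ) (q : List (Fin n)) :
    (seg' f c q).length = q.length := by
  induction q generalizing c with
  | nil => rfl
  | cons i t ih => simp [seg', ih]

lemma seg'_chain {n : ℕ} (f : Fin n → ℂ) (q : List (Fin n)) (hnd : q.Nodup) :
    ∀ c : Fin n → ℂ, (∀ i ∈ q, f i ≠ c i) → List.Chain PickPlace c (seg' f c q) := by
  induction q with
  | nil => intro c _; exact List.Chain.nil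
  | cons i t ih =>
    intro c hmv
    refine List.Chain.cons ⟨i, ?_, ?_⟩ (ih (List.nodup_cons.mp hnd).2 _ ?_)
    · rw [Function.update_self]; exact hmv i (List.mem_cons_self (a := i) (l := t))
    · intro j hj; exact Function.update_of_ne hj _ _
    · intro j hj
      rw [Function.update_of_ne (fun h => (List.nodup_cons.mp hnd).1 (by rw [← h]; exact hj)) ]
      exact hmv j (List.mem_cons_of_mem _ hj)

lemma seg'_mem {n : ℕ} (f : Fin n → ℂ) (q : List (Fin n)) :
    ∀ (c : Fin n → ℂ) (x : Fin n → ℂ), x ∈ seg' f c q →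
      ∃ q₁ q₂ : List (Fin n), q = q₁ ++ q₂ ∧ x = fun j => if j ∈ q₁ then f j else c j := by
  induction q with
  | nil => intro c x hx; cases hx
  | cons i t ih =>
    intro c x hx
    rcases List.mem_cons.mp hx with rfl | hx
    · refine ⟨[i], t, rfl, ?_⟩
      funext j
      by_cases hj : j = i
      · subst hj; simp
      · simp [hj, Function.update_of_ne hj]
    · obtain ⟨q₁, q₂, hq, hx⟩ := ih _ _ hx
      refine ⟨i :: q₁, q₂, by rw [List.cons_append, ← hq], ?_⟩
      subst hx
      funext j
      by_cases h1 : j ∈ q₁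
      · simp [h1]
      · by_cases h2 : j = i
        · subst h2; simp [h1]
        · simp [h1, h2, Function.update_of_ne h2]

lemma seg'_last {n : ℕ} (f : Fin n → ℂ) (q : List (Fin n)) :
    ∀ c : Fin n → ℂ, (c :: seg' f c q).getLast (List.cons_ne_nil _ _) =
      fun j => if j ∈ q then f j else c j := by
  induction q with
  | nil => intro c; simp [seg']
  | cons i t ih =>
    intro c
    show (c :: (Function.update c i (f i) :: seg' f _ t)).getLast _ = _
    rw [List.getLast_cons (List.cons_ne_nil _ _), ih]
    funext j
    by_cases h1 : j ∈ t
    · simp [h1]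
    · by_cases h2 : j = i
      · subst h2; simp [h1]
      · simp [h1, h2, Function.update_of_ne h2]

lemma chain_append' {α : Type*} {R : α → α → Prop} :
    ∀ (l m : List α) (a x : α), List.Chain R a l →
      (a :: l).getLast (List.cons_ne_nil _ _) = x →
      List.Chain R x m → List.Chain R a (l ++ m) := by
  intro l
  induction l with
  | nil =>
    intro m a x _ hx h2
    simp only [List.getLast_singleton] at hx
    subst hx
    simpa using h2
  | cons y t ih =>
    intro m a x h1 hx h2
    simp only [List.Chain, List.isChain_cons_cons] at h1
    simp only [List.cons_append, List.Chain, List.isChain_cons_cons]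
    refine ⟨h1.1, ih m y x h1.2 ?_ h2⟩
    rwa [List.getLast_cons (List.cons_ne_nil _ _)] at hx

lemma getLast_cons_append {α : Type*} (a x : α) (l m : List α)
    (h : (a :: l).getLast (List.cons_ne_nil _ _) = x) :
    (a :: (l ++ m)).getLast (List.cons_ne_nil _ _) =
      (x :: m).getLast (List.cons_ne_nil _ _) := by
  cases m with
  | nil => simpa using h
  | cons z zs =>
    have e : a :: (l ++ z :: zs) = (a :: l) ++ (z :: zs) := by simp
    have h2 : ∀ (u : List α) (hu : u ≠ []), u = (a :: l) ++ (z :: zs) →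
        u.getLast hu = (z :: zs).getLast (List.cons_ne_nil _ _) := by
      intro u hu he
      subst he
      rw [List.getLast_append]
      simp
    rw [h2 _ _ e, List.getLast_cons (List.cons_ne_nil _ _)]

lemma topo {α : Type*} [Fintype α] [DecidableEq α] (r : α → α → Prop)
    (hacyc : ∀ x, ¬ Relation.TransGen r x x) (U : Finset α) :
    ∃ l : List α, l.Nodup ∧ (∀ x, x ∈ l ↔ x ∈ U) ∧ l.Pairwise (fun a c => ¬ r a c) := by
  have hwf : WellFounded (Function.swap r) := by
    have hi : IsIrrefl α (Relation.TransGen (Function.swap r)) :=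
      ⟨fun x hx => hacyc x (Relation.transGen_swap.mp hx)⟩
    exact Subrelation.wf (fun {a b} h => Relation.TransGen.single h)
      (Finite.wellFounded_of_trans_of_irrefl _)
  induction U using Finset.strongInduction with
  | _ U ih =>
    rcases U.eq_empty_or_nonempty with rfl | hne
    · exact ⟨[], List.nodup_nil, by simp, List.Pairwise.nil⟩
    · obtain ⟨a, haU, hmin⟩ := hwf.has_min ↑U (Finset.coe_nonempty.mpr hne)
      have haU' : a ∈ U := haU
      obtain ⟨l', h1, h2, h3⟩ := ih (U.erase a) (Finset.erase_ssubset haU')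
      refine ⟨a :: l', ?_, ?_, ?_⟩
      · rw [List.nodup_cons]
        exact ⟨fun h => (Finset.mem_erase.mp ((h2 a).mp h)).1 rfl, h1⟩
      · intro x
        rw [List.mem_cons, h2, Finset.mem_erase]
        constructor
        · rintro (rfl | ⟨_, hx⟩)
          · exact haU'
          · exact hx
        · intro hx
          by_cases hxa : x = a
          · exact Or.inl hxa
          · exact Or.inr ⟨hxa, hx⟩
      · refine List.Pairwise.cons ?_ h3
        intro x hx
        exact hmin x (Finset.mem_coe.mpr (Finset.mem_of_mem_erase ((h2 x).mp hx)))

end Stmt14Aux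

open Stmt14Aux in
open Metric in
/-- Every tabletop rearrangement instance admits a plan consisting of exactly
`|{i : sᵢ ≠ gᵢ}| + ν` pick-and-place actions, where `ν` is the minimum cardinality of a
feedback vertex set of the dependency digraph of the instance. -/
theorem stmt_14 {n : ℕ} (s g : Fin n → ℂ)
    (hs : ∀ i j : Fin n, i ≠ j → Disjoint (closedBall (s i) 1) (closedBall (s j) 1))
    (hg : ∀ i j : Fin n, i ≠ j → Disjoint (closedBall (g i) 1) (closedBall (g j) 1)) :
    ∃ plan : List (Fin n → ℂ), IsPlan s g plan ∧
      plan.length = {i : Fin n | s i ≠ g i}.ncard + nuFVS (DepArc s g) := by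
  classical
  -- Any target of a dependency arc must move.
  have inM : ∀ u v : Fin n, DepArc s g u v → s v ≠ g v := by
    intro u v huv hsv
    obtain ⟨hne, z, hz⟩ := huv
    rw [Set.mem_inter_iff, hsv] at hz
    exact Set.disjoint_left.mp (hg u v hne) hz.1 hz.2
  -- Extract a minimum feedback vertex set, contained in the set of moving objects.
  have hnuset : {k | ∃ T : Set (Fin n), IsFVS (DepArc s g) T ∧ T.ncard = k}.Nonempty := by
    refine ⟨(Set.univ : Set (Fin n)).ncard, ⟨Set.univ, ?_, rfl⟩⟩
    intro x hx
    have haux : ∀ a c : Fin n, Relation.TransGen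
        (fun u v => DepArc s g u v ∧ u ∉ (Set.univ : Set (Fin n)) ∧ v ∉ (Set.univ : Set (Fin n))) a c → False := by
      intro a c h
      induction h with
      | single h => exact h.2.2 (Set.mem_univ _)
      | tail _ h _ => exact h.2.2 (Set.mem_univ _)
    exact haux x x hx
  obtain ⟨S₀, hS₀, hS₀card⟩ :
      ∃ T : Set (Fin n), IsFVS (DepArc s g) T ∧ T.ncard = nuFVS (DepArc s g) :=
    Nat.sInf_mem hnuset
  set M : Set (Fin n) := {i : Fin n | s i ≠ g i} with hMdef
  have hMmem : ∀ k : Fin n, k ∈ M ↔ s k ≠ g k := fun k => Iff.rfl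
  set S : Set (Fin n) := S₀ ∩ M with hSdef
  have hSsubM : S ⊆ M := Set.inter_subset_right
  have hnotS₀ : ∀ v : Fin n, s v ≠ g v → v ∉ S → v ∉ S₀ :=
    fun v hvM hvS hv0 => hvS ⟨hv0, hvM⟩
  have key : ∀ a c : Fin n,
      Relation.TransGen (fun u v => DepArc s g u v ∧ u ∉ S ∧ v ∉ S) a c →
      a ∉ S₀ →
      Relation.TransGen (fun u v => DepArc s g u v ∧ u ∉ S₀ ∧ v ∉ S₀) a c ∧ c ∉ S₀ := by
    intro a c h
    induction h with
    | single h' =>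
      intro ha
      have hc0 := hnotS₀ _ (inM _ _ h'.1) h'.2.2
      exact ⟨Relation.TransGen.single ⟨h'.1, ha, hc0⟩, hc0⟩
    | tail _ h' ih =>
      intro ha
      obtain ⟨ht, hb0⟩ := ih ha
      have hc0 := hnotS₀ _ (inM _ _ h'.1) h'.2.2
      exact ⟨ht.tail ⟨h'.1, hb0, hc0⟩, hc0⟩
  have hSfvs : IsFVS (DepArc s g) S := by
    intro x hx
    obtain ⟨y, -, hyx⟩ := Relation.TransGen.tail'_iff.mp hx
    have hx0 : x ∉ S₀ := hnotS₀ _ (inM _ _ hyx.1) hyx.2.2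
    exact hS₀ x (key x x hx hx0).1
  have hν : S.ncard = nuFVS (DepArc s g) := by
    refine le_antisymm ?_ (Nat.sInf_le ⟨S, hSfvs, rfl⟩)
    calc S.ncard ≤ S₀.ncard := Set.ncard_le_ncard Set.inter_subset_left (Set.toFinite _)
    _ = nuFVS (DepArc s g) := hS₀card
  -- Finite enumeration of `S` and topological enumeration of `M \ S`.
  have hMfin : M.Finite := Set.toFinite _
  have hSfin : S.Finite := Set.toFinite _
  set Sf : Finset (Fin n) := hSfin.toFinset with hSf
  set Mf : Finset (Fin n) := hMfin.toFinset with hMf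
  set l₁ : List (Fin n) := Sf.toList with hl₁
  have hl₁nd : l₁.Nodup := Sf.nodup_toList
  have hl₁mem : ∀ x, x ∈ l₁ ↔ x ∈ S := by
    intro x
    rw [hl₁, Finset.mem_toList, hSf, Set.Finite.mem_toFinset]
  obtain ⟨l₂, hl₂nd, hl₂mem', hl₂pw⟩ :=
    topo (fun u v => DepArc s g u v ∧ u ∉ S ∧ v ∉ S) hSfvs (Mf \ Sf)
  have hl₂mem : ∀ x, x ∈ l₂ ↔ (x ∈ M ∧ x ∉ S) := by
    intro x
    rw [hl₂mem' x, Finset.mem_sdiff, hMf, hSf, Set.Finite.mem_toFinset,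
      Set.Finite.mem_toFinset]
  -- Buffer positions, far away on the real axis.
  set Sm : ℝ := ∑ k : Fin n, (‖s k‖ + ‖g k‖) with hSm
  have hSm0 : 0 ≤ Sm := Finset.sum_nonneg (fun k _ => by positivity)
  have hSms : ∀ j, ‖s j‖ ≤ Sm := by
    intro j
    have h1 : ‖s j‖ + ‖g j‖ ≤ Sm :=
      Finset.single_le_sum (f := fun k => ‖s k‖ + ‖g k‖)
        (fun k _ => by positivity) (Finset.mem_univ j)
    have h2 := norm_nonneg (g j)
    linarith
  have hSmg : ∀ j, ‖g j‖ ≤ Sm := by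
    intro j
    have h1 : ‖s j‖ + ‖g j‖ ≤ Sm :=
      Finset.single_le_sum (f := fun k => ‖s k‖ + ‖g k‖)
        (fun k _ => by positivity) (Finset.mem_univ j)
    have h2 := norm_nonneg (s j)
    linarith
  set b : Fin n → ℂ := fun i => ((3 + Sm + 4 * ((i : ℕ) : ℝ) : ℝ) : ℂ) with hb
  have hbnorm : ∀ i, 3 + Sm ≤ ‖b i‖ := by
    intro i
    simp only [hb, Complex.norm_real, Real.norm_eq_abs]
    have h1 : (0:ℝ) ≤ 4 * ((i:ℕ):ℝ) := by positivity
    rw [abs_of_nonneg (by linarith)]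
    linarith
  have hd_bs : ∀ i j, 2 < dist (b i) (s j) := by
    intro i j
    have h1 := norm_sub_norm_le (b i) (s j)
    have h2 := hSms j
    have h3 := hbnorm i
    rw [dist_eq_norm]
    linarith
  have hd_bg : ∀ i j, 2 < dist (b i) (g j) := by
    intro i j
    have h1 := norm_sub_norm_le (b i) (g j)
    have h2 := hSmg j
    have h3 := hbnorm i
    rw [dist_eq_norm]
    linarith
  have hd_bb : ∀ i j : Fin n, i ≠ j → 2 < dist (b i) (b j) := by
    intro i j hij
    have hij' : (i : ℕ) ≠ (j : ℕ) := fun h => hij (Fin.ext h)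
    have hcast : b i - b j =
        (((3 + Sm + 4 * ((i:ℕ):ℝ)) - (3 + Sm + 4 * ((j:ℕ):ℝ)) : ℝ) : ℂ) := by
      simp only [hb]
      rw [← Complex.ofReal_sub]
    have h1 : dist (b i) (b j) =
        |(3 + Sm + 4 * ((i:ℕ):ℝ)) - (3 + Sm + 4 * ((j:ℕ):ℝ))| := by
      rw [dist_eq_norm, hcast, Complex.norm_real, Real.norm_eq_abs]
    rw [h1]
    have h2 : (3 + Sm + 4 * ((i:ℕ):ℝ)) - (3 + Sm + 4 * ((j:ℕ):ℝ))
        = 4 * ((i:ℕ):ℝ) - 4 * ((j:ℕ):ℝ) := by ring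
    rw [h2]
    rcases Nat.lt_or_ge (i:ℕ) (j:ℕ) with h | h
    · have h3 : ((i:ℕ):ℝ) + 1 ≤ ((j:ℕ):ℝ) := by exact_mod_cast h
      rw [abs_of_nonpos (by linarith)]
      linarith
    · have h5 : (j:ℕ) + 1 ≤ (i:ℕ) := by omega
      have h3 : ((j:ℕ):ℝ) + 1 ≤ ((i:ℕ):ℝ) := by exact_mod_cast h5
      rw [abs_of_nonneg (by linarith)]
      linarith
  have Dbb : ∀ i j : Fin n, i ≠ j → Disjoint (closedBall (b i) 1) (closedBall (b j) 1) :=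
    fun i j h => disj_of_dist (hd_bb i j h)
  have Dbs : ∀ i j, Disjoint (closedBall (b i) 1) (closedBall (s j) 1) :=
    fun i j => disj_of_dist (hd_bs i j)
  have Dbg : ∀ i j, Disjoint (closedBall (b i) 1) (closedBall (g j) 1) :=
    fun i j => disj_of_dist (hd_bg i j)
  have hbs_ne : ∀ i, b i ≠ s i := by
    intro i h
    have h1 := hd_bs i i
    rw [h, dist_self] at h1
    linarith
  have hgb_ne : ∀ i, g i ≠ b i := by
    intro i h
    have h1 := hd_bg i i
    rw [← h, dist_self] at h1
    linarith
  have hnotdep : ∀ i j : Fin n, i ≠ j → ¬ DepArc s g i j →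
      Disjoint (closedBall (g i) 1) (closedBall (s j) 1) := by
    intro i j hij hnd
    rw [Set.disjoint_iff_inter_eq_empty, ← Set.not_nonempty_iff_eq_empty]
    exact fun h => hnd ⟨hij, h⟩
  -- Intermediate configurations
  set c₁ : Fin n → ℂ := fun j => if j ∈ l₁ then b j else s j with hc₁
  set c₂ : Fin n → ℂ := fun j => if j ∈ l₂ then g j else c₁ j with hc₂
  have hc₁b : ∀ j, j ∈ l₁ → c₁ j = b j := by
    intro j h; simp only [hc₁]; rw [if_pos h]
  have hc₁s : ∀ j, j ∉ l₁ → c₁ j = s j := by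
    intro j h; simp only [hc₁]; rw [if_neg h]
  have hc₂g : ∀ j, j ∈ l₂ → c₂ j = g j := by
    intro j h; simp only [hc₂]; rw [if_pos h]
  have hc₂n : ∀ j, j ∉ l₂ → c₂ j = c₁ j := by
    intro j h; simp only [hc₂]; rw [if_neg h]
  -- The move-change conditions.
  have hmv₁ : ∀ i ∈ l₁, b i ≠ s i := fun i _ => hbs_ne i
  have hmv₂ : ∀ i ∈ l₂, g i ≠ c₁ i := by
    intro i hi
    obtain ⟨hiM, hiS⟩ := (hl₂mem i).mp hi
    have hil : i ∉ l₁ := fun h => hiS ((hl₁mem i).mp h)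
    rw [hc₁s i hil]
    exact fun h => ((hMmem i).mp hiM) h.symm
  have hmv₃ : ∀ i ∈ l₁, g i ≠ c₂ i := by
    intro i hi
    have hiS : i ∈ S := (hl₁mem i).mp hi
    have h2 : i ∉ l₂ := fun h => ((hl₂mem i).mp h).2 hiS
    rw [hc₂n i h2, hc₁b i hi]
    exact hgb_ne i
  -- Feasibility of each phase.
  have feas₁ : ∀ x ∈ seg' b s l₁, FeasibleConfig x := by
    intro x hx
    obtain ⟨q₁, q₂, -, rfl⟩ := seg'_mem b l₁ s x hx
    intro i j hij
    dsimp only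
    by_cases h1 : i ∈ q₁
    · rw [if_pos h1]
      by_cases h2 : j ∈ q₁
      · rw [if_pos h2]; exact Dbb i j hij
      · rw [if_neg h2]; exact Dbs i j
    · rw [if_neg h1]
      by_cases h2 : j ∈ q₁
      · rw [if_pos h2]; exact (Dbs j i).symm
      · rw [if_neg h2]; exact hs i j hij
  have feas₂ : ∀ x ∈ seg' g c₁ l₂, FeasibleConfig x := by
    intro x hx
    obtain ⟨q₁, q₂, hsplit, rfl⟩ := seg'_mem g l₂ c₁ x hx
    have hpw : ∀ a ∈ q₁, ∀ c ∈ q₂, ¬ (DepArc s g a c ∧ a ∉ S ∧ c ∉ S) := by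
      have h := hl₂pw
      rw [hsplit, List.pairwise_append] at h
      exact h.2.2
    have key2 : ∀ i j : Fin n, i ≠ j → i ∈ q₁ → j ∉ q₁ → j ∉ l₁ →
        Disjoint (closedBall (g i) 1) (closedBall (s j) 1) := by
      intro i j hij hi1 hj1 hjl1
      have hil2 : i ∈ l₂ := by rw [hsplit]; exact List.mem_append_left _ hi1
      have hiS : i ∉ S := ((hl₂mem i).mp hil2).2
      have hjS : j ∉ S := fun h => hjl1 ((hl₁mem j).mpr h)
      by_cases hjl2 : j ∈ l₂
      · have hj2 : j ∈ q₂ := by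
          rw [hsplit] at hjl2
          rcases List.mem_append.mp hjl2 with h | h
          · exact absurd h hj1
          · exact h
        exact hnotdep i j hij (fun hd => hpw i hi1 j hj2 ⟨hd, hiS, hjS⟩)
      · have hjM : j ∉ M := fun hM => hjl2 ((hl₂mem j).mpr ⟨hM, hjS⟩)
        have hjsg : s j = g j := not_not.mp (fun h => hjM ((hMmem j).mpr h))
        rw [hjsg]
        exact hg i j hij
    intro i j hij
    dsimp only
    by_cases hi1 : i ∈ q₁
    · rw [if_pos hi1]
      by_cases hj1 : j ∈ q₁
      · rw [if_pos hj1]; exact hg i j hij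
      · rw [if_neg hj1]
        by_cases hjl : j ∈ l₁
        · rw [hc₁b j hjl]; exact (Dbg j i).symm
        · rw [hc₁s j hjl]; exact key2 i j hij hi1 hj1 hjl
    · rw [if_neg hi1]
      by_cases hil : i ∈ l₁
      · rw [hc₁b i hil]
        by_cases hj1 : j ∈ q₁
        · rw [if_pos hj1]; exact Dbg i j
        · rw [if_neg hj1]
          by_cases hjl : j ∈ l₁
          · rw [hc₁b j hjl]; exact Dbb i j hij
          · rw [hc₁s j hjl]; exact Dbs i j
      · rw [hc₁s i hil]
        by_cases hj1 : j ∈ q₁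
        · rw [if_pos hj1]; exact (key2 j i (Ne.symm hij) hj1 hi1 hil).symm
        · rw [if_neg hj1]
          by_cases hjl : j ∈ l₁
          · rw [hc₁b j hjl]; exact (Dbs j i).symm
          · rw [hc₁s j hjl]; exact hs i j hij
  have feas₃ : ∀ x ∈ seg' g c₂ l₁, FeasibleConfig x := by
    intro x hx
    obtain ⟨q₁, q₂, hsplit, rfl⟩ := seg'_mem g l₁ c₂ x hx
    have hclass : ∀ k, (if k ∈ q₁ then g k else c₂ k) = g k ∨
        (if k ∈ q₁ then g k else c₂ k) = b k := by
      intro k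
      by_cases h1 : k ∈ q₁
      · left; rw [if_pos h1]
      · rw [if_neg h1]
        by_cases h2 : k ∈ l₂
        · left; exact hc₂g k h2
        · rw [hc₂n k h2]
          by_cases h3 : k ∈ l₁
          · right; exact hc₁b k h3
          · left
            rw [hc₁s k h3]
            have hkM : k ∉ M := fun hM =>
              h2 ((hl₂mem k).mpr ⟨hM, fun hS => h3 ((hl₁mem k).mpr hS)⟩)
            exact not_not.mp (fun h => hkM ((hMmem k).mpr h))
    intro i j hij
    dsimp only
    rcases hclass i with hi | hi <;> rcases hclass j with hj | hj <;> rw [hi, hj]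
    · exact hg i j hij
    · exact (Dbg j i).symm
    · exact Dbg i j
    · exact Dbb i j hij
  -- Tail-configuration equalities.
  have e1 : (s :: seg' b s l₁).getLast (List.cons_ne_nil _ _) = c₁ := by
    rw [seg'_last]
  have e2 : (c₁ :: seg' g c₁ l₂).getLast (List.cons_ne_nil _ _) = c₂ := by
    rw [seg'_last]
  have e3 : (c₂ :: seg' g c₂ l₁).getLast (List.cons_ne_nil _ _) = g := by
    rw [seg'_last]
    funext j
    by_cases h1 : j ∈ l₁
    · rw [if_pos h1]
    · rw [if_neg h1]
      by_cases h2 : j ∈ l₂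
      · exact hc₂g j h2
      · rw [hc₂n j h2, hc₁s j h1]
        have hjM : j ∉ M := fun hM =>
          h2 ((hl₂mem j).mpr ⟨hM, fun hS => h1 ((hl₁mem j).mpr hS)⟩)
        exact not_not.mp (fun h => hjM ((hMmem j).mpr h))
  refine ⟨seg' b s l₁ ++ (seg' g c₁ l₂ ++ seg' g c₂ l₁), ⟨?_, ?_, ?_⟩, ?_⟩
  · -- the chain property
    refine chain_append' _ _ _ _ (seg'_chain b l₁ hl₁nd s hmv₁) e1 ?_
    exact chain_append' _ _ _ _ (seg'_chain g l₂ hl₂nd c₁ hmv₂) e2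
      (seg'_chain g l₁ hl₁nd c₂ hmv₃)
  · -- feasibility
    intro x hx
    rw [List.mem_append, List.mem_append] at hx
    rcases hx with h | h | h
    · exact feas₁ x h
    · exact feas₂ x h
    · exact feas₃ x h
  · -- final configuration
    rw [getLast_cons_append s c₁ _ _ e1, getLast_cons_append c₁ c₂ _ _ e2]
    exact e3
  · -- length
    rw [List.length_append, List.length_append, seg'_length, seg'_length, seg'_length]
    have hlen₁ : l₁.length = S.ncard := by
      rw [hl₁, Finset.length_toList, hSf, ← Set.ncard_eq_toFinset_card S hSfin]
    have hlen₂ : l₂.length = (Mf \ Sf).card := by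
      rw [← List.toFinset_card_of_nodup hl₂nd]
      congr 1
      ext x
      rw [List.mem_toFinset, hl₂mem' x]
    have hMS : Sf ⊆ Mf := by
      intro x hx
      rw [hMf, Set.Finite.mem_toFinset]
      exact hSsubM (by rwa [hSf, Set.Finite.mem_toFinset] at hx)
    have hMcard : M.ncard = Mf.card := Set.ncard_eq_toFinset_card M hMfin
    have hScard : S.ncard = Sf.card := Set.ncard_eq_toFinset_card S hSfin
    have hsd : (Mf \ Sf).card + Sf.card = Mf.card :=
      Finset.card_sdiff_add_card_eq_card hMS
    rw [hlen₁, hlen₂, ← hν, hMcard, hScard]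
    omega
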